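/- Under the same hypotheses and definitions as follows — 𝒜 an associative unital algebra over a field K, q, λ ∈ K nonzero, η ∈ K, and â, b̂, ĉ, d̂ ∈ 𝒜 satisfying â*b̂ = q⁻¹λ⁻¹•(b̂*â), â*ĉ = q⁻¹λ•(ĉ*â), b̂*d̂ = q⁻¹λ•(d̂*b̂), ĉ*d̂ = q⁻¹λ⁻¹•(d̂*ĉ), â*d̂ − d̂*â = (q⁻¹−q)λ⁻¹•(b̂*ĉ), λ⁻¹•(b̂*ĉ) = λ•(ĉ*b̂); with ã := â − η•ĉ, b̃ := b̂ + η•(â − d̂) − η^2•ĉ, c̃ := ĉ, d̃ := d̂ + η•ĉ, and D̃ := ã*d̃ − q⁻¹λ⁻¹•(b̃*c̃) − η(1 − q⁻¹λ⁻¹)•(ã*c̃) — the following hold: (1) ã*D̃ − D̃*ã = η(λ^2 − 1)•(c̃*D̃); (2) b̃*D̃ − λ^2•(D̃*b̃) = η(λ^2 − 1)•(D̃*d̃ − ã*D̃); (3) c̃*D̃ − λ⁻²•(D̃*c̃) = 0; (4) d̃*D̃ − D̃*d̃ = −η(λ^2 − 1)•(c̃*D̃). -/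
import Mathlib


set_option maxHeartbeats 40000000 in
/-- The transformed quantum determinant
`D̃ = ãd̃ − q⁻¹λ⁻¹ b̃c̃ − η(1 − q⁻¹λ⁻¹) ãc̃` of the contracted `Fun_{q,λ}(GL(2))` algebra
satisfies the stated commutation relations with the transformed generators. -/
theorem contracted_determinant_commutation {K : Type*} [Field K] {A : Type*} [Ring A]
    [Algebra K A] (q lam η : K) (hq : q ≠ 0) (hlam : lam ≠ 0) (a b c d ta tb tc td Dt : A)
    (hab : a * b = (q⁻¹ * lam⁻¹) • (b * a))
    (hac : a * c = (q⁻¹ * lam) • (c * a))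
    (hbd : b * d = (q⁻¹ * lam) • (d * b))
    (hcd : c * d = (q⁻¹ * lam⁻¹) • (d * c))
    (had : a * d - d * a = ((q⁻¹ - q) * lam⁻¹) • (b * c))
    (hbc : lam⁻¹ • (b * c) = lam • (c * b))
    (hta : ta = a - η • c)
    (htb : tb = b + η • (a - d) - η ^ 2 • c)
    (htc : tc = c)
    (htd : td = d + η • c)
    (hDt : Dt = ta * td - (q⁻¹ * lam⁻¹) • (tb * tc) - (η * (1 - q⁻¹ * lam⁻¹)) • (ta * tc)) :
    ta * Dt - Dt * ta = (η * (lam ^ 2 - 1)) • (tc * Dt) ∧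
    tb * Dt - lam ^ 2 • (Dt * tb) = (η * (lam ^ 2 - 1)) • (Dt * td - ta * Dt) ∧
    tc * Dt - (lam⁻¹) ^ 2 • (Dt * tc) = 0 ∧
    td * Dt - Dt * td = (-(η * (lam ^ 2 - 1))) • (tc * Dt) := by
  have hba : b * a = (q * lam) • (a * b) := by
    rw [hab, smul_smul, show q * lam * (q⁻¹ * lam⁻¹) = 1 by field_simp, one_smul]
  have hca : c * a = (q * lam⁻¹) • (a * c) := by
    rw [hac, smul_smul, show q * lam⁻¹ * (q⁻¹ * lam) = 1 by field_simp, one_smul]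
  have hdb : d * b = (q * lam⁻¹) • (b * d) := by
    rw [hbd, smul_smul, show q * lam⁻¹ * (q⁻¹ * lam) = 1 by field_simp, one_smul]
  have hdc : d * c = (q * lam) • (c * d) := by
    rw [hcd, smul_smul, show q * lam * (q⁻¹ * lam⁻¹) = 1 by field_simp, one_smul]
  have hcb : c * b = (lam⁻¹ * lam⁻¹) • (b * c) := by
    have h := congrArg (fun x : A => lam⁻¹ • x) hbc
    simp only [smul_smul] at h
    rw [inv_mul_cancel₀ hlam, one_smul] at h
    exact h.symm
  have hda : d * a = a * d - ((q⁻¹ - q) * lam⁻¹) • (b * c) := by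
    rw [← had]; abel
  have hba' : ∀ x : A, b * (a * x) = (q * lam) • (a * (b * x)) := fun x => by
    rw [← mul_assoc, hba, smul_mul_assoc, mul_assoc]
  have hca' : ∀ x : A, c * (a * x) = (q * lam⁻¹) • (a * (c * x)) := fun x => by
    rw [← mul_assoc, hca, smul_mul_assoc, mul_assoc]
  have hdb' : ∀ x : A, d * (b * x) = (q * lam⁻¹) • (b * (d * x)) := fun x => by
    rw [← mul_assoc, hdb, smul_mul_assoc, mul_assoc]
  have hdc' : ∀ x : A, d * (c * x) = (q * lam) • (c * (d * x)) := fun x => by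
    rw [← mul_assoc, hdc, smul_mul_assoc, mul_assoc]
  have hcb' : ∀ x : A, c * (b * x) = (lam⁻¹ * lam⁻¹) • (b * (c * x)) := fun x => by
    rw [← mul_assoc, hcb, smul_mul_assoc, mul_assoc]
  have hda' : ∀ x : A, d * (a * x) = a * (d * x) - ((q⁻¹ - q) * lam⁻¹) • (b * (c * x)) :=
    fun x => by rw [← mul_assoc, hda, sub_mul, smul_mul_assoc, mul_assoc, mul_assoc]
  subst hta htb htc htd hDt
  refine ⟨?_, ?_, ?_, ?_⟩ <;>
  · simp only [mul_sub, sub_mul, mul_add, add_mul, smul_sub, smul_add, smul_mul_assoc,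
      mul_smul_comm, smul_smul, mul_assoc, hba', hca', hdb', hdc', hcb', hda',
      hba, hca, hdb, hdc, hcb, hda]
    match_scalars <;> repeat' (first | (field_simp; try ring) | ring)
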